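/- Let t > 0 with t ≠ 1, and define c(k) = 16k³ - 12(t+1)k² + 4(2t - 1)k + t + 1. Then c has exactly one root in the open interval with endpoints 1/2 and t/2. -/

import Mathlib

theorem cubic_unique_root (t : ℝ) (ht : 0 < t) (ht1 : t ≠ 1)
    (c : ℝ → ℝ)
    (hc : ∀ k, c k = 16*k^3 - 12*(t+1)*k^2 + 4*(2*t - 1)*k + t + 1) :
    ∃! k : ℝ, k ∈ Set.Ioo (min (1/2) (t/2)) (max (1/2) (t/2)) ∧ c k = 0 := by
  have hceq : c = fun k => 16*k^3 - 12*(t+1)*k^2 + 4*(2*t - 1)*k + t + 1 := funext hc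
  set a := min (1/2 : ℝ) (t/2) with ha
  set b := max (1/2 : ℝ) (t/2) with hb
  have hne : (1/2 : ℝ) ≠ t/2 := by intro h; apply ht1; linarith
  have hab : a < b := min_lt_max.mpr hne
  have hcont : Continuous c := by rw [hceq]; continuity
  have hd : ∀ k : ℝ, HasDerivAt c (48*k^2 - 24*(t+1)*k + 4*(2*t-1)) k := by
    intro k
    rw [hceq]
    have h := (((((hasDerivAt_pow 3 k).const_mul (16:ℝ)).sub
      ((hasDerivAt_pow 2 k).const_mul (12*(t+1)))).add
      ((hasDerivAt_id' k).const_mul (4*(2*t-1)))).add_const t).add_const 1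
    refine h.congr_deriv ?_
    push_cast
    ring
  have hderiv_neg : ∀ x ∈ Set.Ioo a b, deriv c x < 0 := by
    intro x hx
    rw [(hd x).deriv]
    have h1 : a < x := hx.1
    have h2 : x < b := hx.2
    have hprod : (x - 1/2) * (x - t/2) < 0 := by
      rcases le_total t 1 with h | h
      · have hm : a = t/2 := min_eq_right (by linarith)
        have hM : b = 1/2 := max_eq_left (by linarith)
        rw [hm] at h1; rw [hM] at h2
        nlinarith
      · have hm : a = 1/2 := min_eq_left (by linarith)
        have hM : b = t/2 := max_eq_right (by linarith)
        rw [hm] at h1; rw [hM] at h2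
        nlinarith
    nlinarith
  have hanti : StrictAntiOn c (Set.Icc a b) := by
    apply strictAntiOn_of_deriv_neg (convex_Icc a b) hcont.continuousOn
    intro x hx
    rw [interior_Icc] at hx
    exact hderiv_neg x hx
  have hca0 : 0 < c a := by
    rcases le_total t 1 with h | h
    · have hm : a = t/2 := min_eq_right (by linarith)
      have h1 : t < 1 := lt_of_le_of_ne h ht1
      rw [hm, hc]
      nlinarith [sq_nonneg t, mul_pos ht ht]
    · have hm : a = 1/2 := min_eq_left (by linarith)
      have h1 : 1 < t := lt_of_le_of_ne h (Ne.symm ht1)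
      rw [hm, hc]
      nlinarith
  have hcb0 : c b < 0 := by
    rcases le_total t 1 with h | h
    · have hM : b = 1/2 := max_eq_left (by linarith)
      have h1 : t < 1 := lt_of_le_of_ne h ht1
      rw [hM, hc]
      nlinarith
    · have hM : b = t/2 := max_eq_right (by linarith)
      have h1 : 1 < t := lt_of_le_of_ne h (Ne.symm ht1)
      rw [hM, hc]
      nlinarith [sq_nonneg t, mul_pos ht ht]
  have hsub := intermediate_value_Ioo' hab.le hcont.continuousOn
  obtain ⟨k, hk, hk0⟩ := hsub ⟨hcb0, hca0⟩
  refine ⟨k, ⟨hk, hk0⟩, ?_⟩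
  rintro y ⟨hy, hy0⟩
  exact hanti.injOn (Set.Ioo_subset_Icc_self hy) (Set.Ioo_subset_Icc_self hk)
    (by rw [hy0, hk0])
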